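/- Chi-square fluctuation contraction for channels (trace identity): Let W be a channel from [k] (k even) to finite Y with Σ_x W(y|x) > 0 for all y, let u be uniform on [k], and let p_z, z ∈ {−1,1}^{k/2}, be the Paninski family with parameter ε. Then E_Z[χ²(W∘p_Z ‖ W∘u)] = (4ε²/k)·trace(H(W)), where Z is uniform on {−1,1}^{k/2} and W∘p(y) = Σ_x p(x) W(y|x). -/

import Mathlib

/-- The real ±1 value encoded by a boolean. -/
noncomputable def sgn (b : Bool) : ℝ := if b then 1 else -1

/-- The Paninski perturbed family on `[k]` with `k = 2m`. -/
noncomputable def paninski (m : ℕ) (ε : ℝ) (z : Fin m → ℝ) : Fin m × Bool → ℝ :=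
  fun x => (1 + (if x.2 then -1 else 1) * 2 * ε * z x.1) / (2 * m)

/-- The matrix `H(W)` associated to a channel `W` from `[k]` (with `k = 2m`). -/
noncomputable def Hmat {Y : Type*} [Fintype Y] (m : ℕ) (W : Fin m × Bool → Y → ℝ) :
    Matrix (Fin m) (Fin m) ℝ :=
  Matrix.of fun i₁ i₂ => ∑ y,
    (W (i₁, false) y - W (i₁, true) y) * (W (i₂, false) y - W (i₂, true) y) / ∑ x, W x y

lemma sgn_not (b : Bool) : sgn (!b) = - sgn b := by cases b <;> simp [sgn]

lemma sgn_mul_self (b : Bool) : sgn b * sgn b = 1 := by cases b <;> norm_num [sgn]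

lemma sum_sgn_mul {m : ℕ} (i j : Fin m) :
    ∑ s : Fin m → Bool, sgn (s i) * sgn (s j) = if i = j then (2 : ℝ) ^ m else 0 := by
  rcases eq_or_ne i j with rfl | hij
  · simp [sgn_mul_self, Finset.sum_const, Finset.card_univ]
  · rw [if_neg hij]
    have hinv : Function.Involutive (fun s : Fin m → Bool => Function.update s i (!s i)) := by
      intro s
      simp [Function.update_idem, Function.update_self, Function.update_eq_self]
    have hcomp := Equiv.sum_comp (hinv.toPerm)
      (fun s : Fin m → Bool => sgn (s i) * sgn (s j))
    have hval : ∀ s : Fin m → Bool,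
        sgn ((Function.update s i (!s i)) i) * sgn ((Function.update s i (!s i)) j)
          = -(sgn (s i) * sgn (s j)) := by
      intro s
      rw [Function.update_self, Function.update_of_ne (Ne.symm hij), sgn_not]
      ring
    have hneg : ∑ s : Fin m → Bool, sgn (s i) * sgn (s j)
        = -∑ s : Fin m → Bool, sgn (s i) * sgn (s j) := by
      conv_lhs => rw [← hcomp]
      simp only [Function.Involutive.toPerm, Equiv.coe_fn_mk]
      rw [← Finset.sum_neg_distrib]
      exact Finset.sum_congr rfl fun s _ => hval s
    linarith

/-- Chi-square fluctuation contraction: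
`E_Z[χ²(W∘p_Z ‖ W∘u)] = (4ε²/k) · trace(H(W))` for `Z` uniform on `{−1,1}^{k/2}`. -/
theorem chiSq_fluctuation_trace (m : ℕ) (hm : 0 < m) (ε : ℝ)
    (hε0 : 0 < ε) (hε : ε < 1 / 2)
    {Y : Type*} [Fintype Y] (W : Fin m × Bool → Y → ℝ)
    (hW0 : ∀ x y, 0 ≤ W x y) (hW1 : ∀ x, ∑ y, W x y = 1)
    (hWy : ∀ y, 0 < ∑ x, W x y) :
    (∑ s : Fin m → Bool,
        ∑ y, ((∑ x, paninski m ε (fun i => sgn (s i)) x * W x y)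
              - ∑ x, (1 / (2 * m : ℝ)) * W x y) ^ 2
            / ∑ x, (1 / (2 * m : ℝ)) * W x y) / 2 ^ m
      = (4 * ε ^ 2 / (2 * m)) * Matrix.trace (Hmat m W) := by
  have hm' : (m : ℝ) ≠ 0 := Nat.cast_ne_zero.mpr hm.ne'
  set D : Fin m → Y → ℝ := fun i y => W (i, false) y - W (i, true) y with hD
  have hS : ∀ y, (∑ x, W x y) ≠ 0 := fun y => (hWy y).ne'
  -- step 1: the numerator difference
  have key : ∀ (z : Fin m → ℝ) (y : Y),
      (∑ x, paninski m ε z x * W x y) - ∑ x, (1 / (2 * m : ℝ)) * W x y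
        = (ε / m) * ∑ i, z i * D i y := by
    intro z y
    rw [← Finset.sum_sub_distrib, Fintype.sum_prod_type, Finset.mul_sum]
    refine Finset.sum_congr rfl fun i _ => ?_
    rw [Fintype.sum_bool]
    simp only [paninski, hD]
    field_simp
    simp only [↓reduceIte, Bool.false_eq_true]
    ring
  have hden : ∀ y, ∑ x, (1 / (2 * (m : ℝ))) * W x y = (1 / (2 * m)) * ∑ x, W x y :=
    fun y => (Finset.mul_sum _ _ _).symm
  -- step 2: sign orthogonality
  have sqsum : ∀ y, ∑ s : Fin m → Bool, (∑ i, sgn (s i) * D i y) ^ 2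
      = 2 ^ m * ∑ i, (D i y) ^ 2 := by
    intro y
    have expand : ∀ s : Fin m → Bool, (∑ i, sgn (s i) * D i y) ^ 2
        = ∑ i, ∑ j, (sgn (s i) * sgn (s j)) * (D i y * D j y) := by
      intro s
      rw [sq, Finset.sum_mul_sum]
      exact Finset.sum_congr rfl fun i _ => Finset.sum_congr rfl fun j _ => by ring
    simp_rw [expand]
    rw [Finset.sum_comm]
    have swap2 : ∀ i : Fin m, ∑ s : Fin m → Bool, ∑ j,
        (sgn (s i) * sgn (s j)) * (D i y * D j y)
        = ∑ j, (∑ s : Fin m → Bool, sgn (s i) * sgn (s j)) * (D i y * D j y) := by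
      intro i
      rw [Finset.sum_comm]
      exact Finset.sum_congr rfl fun j _ => (Finset.sum_mul _ _ _).symm
    simp_rw [swap2, sum_sgn_mul]
    rw [Finset.mul_sum]
    refine Finset.sum_congr rfl fun i _ => ?_
    simp [Finset.sum_ite_eq, pow_two]
  -- per term value
  have step1 : ∀ (s : Fin m → Bool) (y : Y),
      ((∑ x, paninski m ε (fun i => sgn (s i)) x * W x y)
          - ∑ x, (1 / (2 * m : ℝ)) * W x y) ^ 2
        / ∑ x, (1 / (2 * m : ℝ)) * W x y
      = (2 * ε ^ 2 / m) * (∑ i, sgn (s i) * D i y) ^ 2 / ∑ x, W x y := by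
    intro s y
    rw [key, hden]
    have h := hS y
    set A := ∑ i, sgn (s i) * D i y with hA
    set T := ∑ x : Fin m × Bool, W x y with hT
    field_simp
  have trace_eq : Matrix.trace (Hmat m W) = ∑ i, ∑ y, (D i y) ^ 2 / ∑ x, W x y := by
    simp [Matrix.trace, Matrix.diag, Hmat, hD, pow_two]
  rw [div_eq_iff (by positivity : (2 : ℝ) ^ m ≠ 0)]
  calc ∑ s : Fin m → Bool,
        ∑ y, ((∑ x, paninski m ε (fun i => sgn (s i)) x * W x y)
              - ∑ x, (1 / (2 * m : ℝ)) * W x y) ^ 2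
            / ∑ x, (1 / (2 * m : ℝ)) * W x y
      = ∑ s : Fin m → Bool, ∑ y,
          (2 * ε ^ 2 / m) * (∑ i, sgn (s i) * D i y) ^ 2 / ∑ x, W x y :=
        Finset.sum_congr rfl fun s _ => Finset.sum_congr rfl fun y _ => step1 s y
    _ = ∑ y, ∑ s : Fin m → Bool,
          (2 * ε ^ 2 / m) * (∑ i, sgn (s i) * D i y) ^ 2 / ∑ x, W x y :=
        Finset.sum_comm
    _ = ∑ y, (2 * ε ^ 2 / m) * (2 ^ m * ∑ i, (D i y) ^ 2) / ∑ x, W x y := by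
        refine Finset.sum_congr rfl fun y _ => ?_
        rw [← Finset.sum_div, ← Finset.mul_sum, sqsum y]
    _ = 4 * ε ^ 2 / (2 * m) * Matrix.trace (Hmat m W) * 2 ^ m := by
        rw [trace_eq, Finset.sum_comm, Finset.mul_sum, Finset.sum_mul]
        refine Finset.sum_congr rfl fun y _ => ?_
        rw [← Finset.sum_div]
        field_simp
        ring
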